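/- Along any solution of the OIM dynamics, the energy is nonincreasing: if θ : ℝ → ℝ^N is differentiable and satisfies θ'(t) = f(θ(t)) for all t, then for all t the derivative of t ↦ E(θ(t)) equals -2 ∑_i f_i(θ(t))², which is ≤ 0. -/

import Mathlib

open Real Finset

/-- The OIM energy function
`E(θ) = -K ∑_{i,j, j≠i} W i j * cos (θ i - θ j) - K_s ∑ i, cos (2 θ i)`. -/
noncomputable def oimEnergy (N : ℕ) (K Ks : ℝ) (W : Fin N → Fin N → ℝ)
    (θ : Fin N → ℝ) : ℝ :=
  -K * ∑ i, ∑ j ∈ Finset.univ.filter (fun j => j ≠ i), W i j * Real.cos (θ i - θ j)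
    - Ks * ∑ i, Real.cos (2 * θ i)

/-- The OIM vector field `f i (θ) = -K ∑ j, W i j * sin (θ i - θ j) - K_s * sin (2 θ i)`. -/
noncomputable def oimField (N : ℕ) (K Ks : ℝ) (W : Fin N → Fin N → ℝ)
    (θ : Fin N → ℝ) (i : Fin N) : ℝ :=
  -K * ∑ j, W i j * Real.sin (θ i - θ j) - Ks * Real.sin (2 * θ i)

/-- along any solution of the OIM dynamics, the derivative of the
energy equals `-2 ∑ i, f_i(θ(t))²`, which is nonpositive. -/
theorem oim_energy_derivative_along_solutions (N : ℕ) (hN : 1 ≤ N) (K Ks : ℝ)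
    (W : Fin N → Fin N → ℝ) (hdiag : ∀ i, W i i = 0) (hsym : ∀ i j, W i j = W j i)
    (θ : ℝ → Fin N → ℝ)
    (hθ : ∀ t, HasDerivAt θ (oimField N K Ks W (θ t)) t) (t : ℝ) :
    HasDerivAt (fun t => oimEnergy N K Ks W (θ t))
        (-2 * ∑ i, (oimField N K Ks W (θ t) i) ^ 2) t ∧
      -2 * ∑ i, (oimField N K Ks W (θ t) i) ^ 2 ≤ 0 := by
  have hnonpos : -2 * ∑ i, (oimField N K Ks W (θ t) i) ^ 2 ≤ 0 := by
    have : (0:ℝ) ≤ ∑ i, (oimField N K Ks W (θ t) i) ^ 2 :=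
      Finset.sum_nonneg fun i _ => sq_nonneg _
    linarith
  refine ⟨?_, hnonpos⟩
  set F : Fin N → ℝ := oimField N K Ks W (θ t) with hF
  have hcomp : ∀ i, HasDerivAt (fun s => θ s i) (F i) t :=
    fun i => hasDerivAt_pi.mp (hθ t) i
  have h1 : ∀ i j, HasDerivAt (fun s => Real.cos (θ s i - θ s j))
      (-Real.sin (θ t i - θ t j) * (F i - F j)) t :=
    fun i j => ((hcomp i).sub (hcomp j)).cos
  have h2 : ∀ i : Fin N, HasDerivAt (fun s => Real.cos (2 * θ s i))
      (-Real.sin (2 * θ t i) * (2 * F i)) t :=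
    fun i => ((hcomp i).const_mul 2).cos
  have hE : HasDerivAt (fun s => oimEnergy N K Ks W (θ s))
      (-K * ∑ i, ∑ j ∈ Finset.univ.filter (fun j => j ≠ i),
          W i j * (-Real.sin (θ t i - θ t j) * (F i - F j))
        - Ks * ∑ i, (-Real.sin (2 * θ t i) * (2 * F i))) t := by
    unfold oimEnergy
    exact ((HasDerivAt.fun_sum (fun i _ => HasDerivAt.fun_sum
        (fun j _ => (h1 i j).const_mul (W i j)))).const_mul (-K)).sub
      ((HasDerivAt.fun_sum (fun i _ => h2 i)).const_mul Ks)
  convert hE using 1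
  -- algebra
  set s : Fin N → ℝ := fun i => ∑ j, W i j * Real.sin (θ t i - θ t j) with hs
  have hFi : ∀ i, F i = -K * s i - Ks * Real.sin (2 * θ t i) := fun i => rfl
  have hfull : ∀ i, ∑ j ∈ Finset.univ.filter (fun j => j ≠ i),
      W i j * (-Real.sin (θ t i - θ t j) * (F i - F j))
      = ∑ j, W i j * (-Real.sin (θ t i - θ t j) * (F i - F j)) := by
    intro i
    rw [Finset.filter_ne', Finset.sum_erase]
    simp [hdiag i]
  have key : ∑ i, ∑ j, W i j * (Real.sin (θ t i - θ t j) * F j)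
      = -(∑ i, s i * F i) := by
    rw [Finset.sum_comm, ← Finset.sum_neg_distrib]
    refine Finset.sum_congr rfl fun j _ => ?_
    have : ∀ i, W i j * (Real.sin (θ t i - θ t j) * F j)
        = -(W j i * Real.sin (θ t j - θ t i)) * F j := by
      intro i
      rw [hsym i j]
      have : Real.sin (θ t i - θ t j) = -Real.sin (θ t j - θ t i) := by
        rw [← Real.sin_neg]; ring_nf
      rw [this]; ring
    simp_rw [this, neg_mul]
    rw [Finset.sum_neg_distrib, ← Finset.sum_mul]
  have key2 : ∑ i, ∑ j, W i j * (Real.sin (θ t i - θ t j) * F i)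
      = ∑ i, s i * F i := by
    refine Finset.sum_congr rfl fun i _ => ?_
    rw [hs, Finset.sum_mul]
    exact Finset.sum_congr rfl fun j _ => by ring
  simp_rw [hfull]
  have expand : ∀ i j, W i j * (-Real.sin (θ t i - θ t j) * (F i - F j))
      = -(W i j * (Real.sin (θ t i - θ t j) * F i))
        + W i j * (Real.sin (θ t i - θ t j) * F j) := fun i j => by ring
  simp_rw [expand, Finset.sum_add_distrib, Finset.sum_neg_distrib, key, key2]
  have sq : ∀ i, F i ^ 2 = F i * F i := fun i => sq (F i)
  have hFsum : ∑ i, F i ^ 2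
      = -K * ∑ i, s i * F i - Ks * ∑ i, Real.sin (2 * θ t i) * F i := by
    rw [Finset.mul_sum, Finset.mul_sum, ← Finset.sum_sub_distrib]
    refine Finset.sum_congr rfl fun i _ => ?_
    rw [sq i]
    nth_rw 1 [hFi i]
    ring
  have h2exp : ∀ i : Fin N, -Real.sin (2 * θ t i) * (2 * F i)
      = -2 * (Real.sin (2 * θ t i) * F i) := fun i => by ring
  simp_rw [h2exp]
  rw [← Finset.mul_sum, hFsum]
  ring
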